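/- Let L be a finite set of lines in F_q^n and X ⊆ F_q^n with |l ∩ X| ≥ q/200 for each l ∈ L, X nonempty. Then there exists a line l₀ ∈ L such that the number of lines l ∈ L \ {l₀} that intersect l₀ is at least (1/200²)·q²·|L|/|X| − q. -/
import Mathlib

def IsLine (F : Type*) [Field F] {n : ℕ} (l : Set (Fin n → F)) : Prop :=
  ∃ a v : Fin n → F, v ≠ 0 ∧ l = {x | ∃ t : F, x = a + t • v}

section aux
variable {F : Type*} [Field F] {n : ℕ}

lemma card_filter_eq_sum {α : Type*} (s : Finset α) (p : α → Prop) [DecidablePred p] :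
    (s.filter p).card = ∑ a ∈ s, if p a then 1 else 0 := by
  rw [Finset.card_eq_sum_ones, Finset.sum_filter]

lemma line_through {l : Set (Fin n → F)} (hl : IsLine F l)
    {p q : Fin n → F} (hp : p ∈ l) (hq : q ∈ l) (hpq : p ≠ q) :
    l = {x | ∃ t : F, x = p + t • (q - p)} := by
  obtain ⟨a, v, hv, rfl⟩ := hl
  obtain ⟨s, hs⟩ := hp
  subst hs
  obtain ⟨u, hu⟩ := hq
  have hqp : q - (a + s • v) = (u - s) • v := by rw [hu, sub_smul]; abel
  have hus : u - s ≠ 0 := by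
    intro h
    apply hpq
    rw [hu, sub_eq_zero.mp h]
  ext x
  simp only [Set.mem_setOf_eq]
  constructor
  · rintro ⟨t, rfl⟩
    refine ⟨(t - s) / (u - s), ?_⟩
    rw [hqp, smul_smul, div_mul_cancel₀ _ hus, sub_smul]
    abel
  · rintro ⟨t, rfl⟩
    refine ⟨s + t * (u - s), ?_⟩
    rw [hqp, add_smul, mul_smul]
    abel

lemma line_inter_subsingleton {l l' : Set (Fin n → F)} (hl : IsLine F l)
    (hl' : IsLine F l') (hne : l ≠ l') : (l ∩ l').Subsingleton := by
  intro p hp q hq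
  by_contra hpq
  exact hne ((line_through hl hp.1 hq.1 hpq).trans (line_through hl' hp.2 hq.2 hpq).symm)

lemma line_ncard [Fintype F] {l : Set (Fin n → F)} (hl : IsLine F l) :
    l.ncard = Fintype.card F := by
  obtain ⟨a, v, hv, rfl⟩ := hl
  have hinj : Function.Injective (fun t : F => a + t • v) := by
    intro s t h
    simp only at h
    have h2 : (s - t) • v = 0 := by
      rw [sub_smul, sub_eq_zero]
      exact add_left_cancel h
    rcases smul_eq_zero.mp h2 with h3 | h3
    · exact sub_eq_zero.mp h3
    · exact absurd h3 hv
  have hr : {x | ∃ t : F, x = a + t • v} = Set.range (fun t : F => a + t • v) := by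
    ext x; simp [eq_comm]
  rw [hr, ← Set.image_univ, Set.ncard_image_of_injective _ hinj, Set.ncard_univ,
    Nat.card_eq_fintype_card]

end aux

theorem stmt_9 {F : Type*} [Field F] [Fintype F] {n : ℕ}
    (L : Finset (Set (Fin n → F))) (hLne : L.Nonempty)
    (hL : ∀ l ∈ L, IsLine F l)
    (X : Set (Fin n → F)) (hX : X.Nonempty)
    (hinc : ∀ l ∈ L, (Fintype.card F : ℝ) / 200 ≤ ((l ∩ X).ncard : ℝ)) :
    ∃ l₀ ∈ L,
      (1 / 200 ^ 2) * (Fintype.card F : ℝ) ^ 2 * L.card / (X.ncard : ℝ)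
          - (Fintype.card F : ℝ) ≤
        (({l | l ∈ L ∧ l ≠ l₀ ∧ (l ∩ l₀).Nonempty}).ncard : ℝ) := by
  classical
  have hXfin : X.Finite := X.toFinite
  set XF := hXfin.toFinset with hXFdef
  set d : (Fin n → F) → ℕ := fun p => (L.filter (fun l => p ∈ l)).card with hd
  set g : Set (Fin n → F) → ℕ := fun l => ∑ p ∈ XF.filter (fun p => p ∈ l), d p with hg
  -- incidence count in terms of finsets
  have hcount : ∀ l : Set (Fin n → F),
      (l ∩ X).ncard = (XF.filter (fun p => p ∈ l)).card := by
    intro l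
    rw [← Set.ncard_coe_finset]
    congr 1
    ext p
    simp only [Finset.coe_filter, Set.mem_setOf_eq, Set.mem_inter_iff, hXfin.mem_toFinset,
      hXFdef]
    tauto
  -- total incidence sum
  have hsum1 : ∑ l ∈ L, (XF.filter (fun p => p ∈ l)).card = ∑ p ∈ XF, d p := by
    calc ∑ l ∈ L, (XF.filter (fun p => p ∈ l)).card
        = ∑ l ∈ L, ∑ p ∈ XF, if p ∈ l then 1 else 0 :=
          Finset.sum_congr rfl fun l _ => card_filter_eq_sum _ _
      _ = ∑ p ∈ XF, ∑ l ∈ L, if p ∈ l then 1 else 0 := Finset.sum_comm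
      _ = ∑ p ∈ XF, d p :=
          Finset.sum_congr rfl fun p _ => (card_filter_eq_sum _ _).symm
  -- sum of g = sum of squares of degrees
  have hsum2 : ∑ l ∈ L, g l = ∑ p ∈ XF, d p ^ 2 := by
    calc ∑ l ∈ L, g l
        = ∑ l ∈ L, ∑ p ∈ XF, if p ∈ l then d p else 0 :=
          Finset.sum_congr rfl fun l _ => Finset.sum_filter _ _
      _ = ∑ p ∈ XF, ∑ l ∈ L, if p ∈ l then d p else 0 := Finset.sum_comm
      _ = ∑ p ∈ XF, d p ^ 2 := by
          refine Finset.sum_congr rfl fun p _ => ?_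
          rw [← Finset.sum_filter, Finset.sum_const, smul_eq_mul, sq]
  -- pigeonhole: pick l₀ maximizing g
  obtain ⟨l₀, hl₀L, hl₀max⟩ := L.exists_max_image g hLne
  refine ⟨l₀, hl₀L, ?_⟩
  have hpigeon : ∑ p ∈ XF, d p ^ 2 ≤ L.card * g l₀ := by
    rw [← hsum2]
    calc ∑ l ∈ L, g l ≤ ∑ _l ∈ L, g l₀ := Finset.sum_le_sum fun l hl => hl₀max l hl
      _ = L.card * g l₀ := by rw [Finset.sum_const, smul_eq_mul]
  -- decompose g l₀ over lines
  have hgdec : g l₀ = ∑ l' ∈ L, (XF.filter (fun p => p ∈ l₀ ∧ p ∈ l')).card := by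
    calc g l₀
        = ∑ p ∈ XF.filter (fun p => p ∈ l₀), ∑ l' ∈ L, if p ∈ l' then 1 else 0 :=
          Finset.sum_congr rfl fun p _ => card_filter_eq_sum _ _
      _ = ∑ l' ∈ L, ∑ p ∈ XF.filter (fun p => p ∈ l₀), if p ∈ l' then 1 else 0 :=
          Finset.sum_comm
      _ = ∑ l' ∈ L, (XF.filter (fun p => p ∈ l₀ ∧ p ∈ l')).card := by
          refine Finset.sum_congr rfl fun l' _ => ?_
          rw [← card_filter_eq_sum, Finset.filter_filter]
  -- the target count as a finset
  have htarget : ({l | l ∈ L ∧ l ≠ l₀ ∧ (l ∩ l₀).Nonempty} : Set _).ncard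
      = ((L.erase l₀).filter (fun l => (l ∩ l₀).Nonempty)).card := by
    rw [← Set.ncard_coe_finset]
    congr 1
    ext l
    simp only [Finset.coe_filter, Finset.mem_erase, Set.mem_setOf_eq]
    tauto
  set N : ℕ := ((L.erase l₀).filter (fun l => (l ∩ l₀).Nonempty)).card with hN
  -- bound the diagonal term
  have hdiag : (XF.filter (fun p => p ∈ l₀ ∧ p ∈ l₀)).card ≤ Fintype.card F := by
    rw [← line_ncard (hL l₀ hl₀L), ← Set.ncard_coe_finset]
    apply Set.ncard_le_ncard _ l₀.toFinite
    intro p hp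
    simp only [Finset.coe_filter, Set.mem_setOf_eq] at hp
    exact hp.2.1
  -- bound the off-diagonal terms
  have hoff : ∑ l' ∈ L.erase l₀, (XF.filter (fun p => p ∈ l₀ ∧ p ∈ l')).card ≤ N := by
    calc ∑ l' ∈ L.erase l₀, (XF.filter (fun p => p ∈ l₀ ∧ p ∈ l')).card
        ≤ ∑ l' ∈ L.erase l₀, if (l' ∩ l₀).Nonempty then 1 else 0 := by
          refine Finset.sum_le_sum fun l' hl' => ?_
          have hne : l' ≠ l₀ := Finset.ne_of_mem_erase hl'
          have hl'L : l' ∈ L := Finset.mem_of_mem_erase hl'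
          split_ifs with h
          · apply Finset.card_le_one.mpr
            intro p hp q hq
            simp only [Finset.mem_filter] at hp hq
            exact line_inter_subsingleton (hL l₀ hl₀L) (hL l' hl'L) (fun e => hne e.symm)
              ⟨hp.2.1, hp.2.2⟩ ⟨hq.2.1, hq.2.2⟩
          · rw [Nat.le_zero, Finset.card_eq_zero, Finset.filter_eq_empty_iff]
            rintro p _ ⟨h1, h2⟩
            exact h ⟨p, h2, h1⟩
      _ = N := (card_filter_eq_sum _ _).symm
  have hgle : g l₀ ≤ Fintype.card F + N := by
    rw [hgdec, ← Finset.add_sum_erase L _ hl₀L]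
    exact Nat.add_le_add hdiag hoff
  -- Cauchy-Schwarz in ℝ
  have hCS : ((∑ p ∈ XF, d p : ℕ) : ℝ) ^ 2 ≤ (XF.card : ℝ) * ((∑ p ∈ XF, d p ^ 2 : ℕ) : ℝ) := by
    push_cast
    exact sq_sum_le_card_mul_sum_sq
  -- lower bound on total incidences
  have hlow : (L.card : ℝ) * ((Fintype.card F : ℝ) / 200) ≤ ((∑ p ∈ XF, d p : ℕ) : ℝ) := by
    rw [← hsum1]
    push_cast
    calc (L.card : ℝ) * ((Fintype.card F : ℝ) / 200)
        = ∑ _l ∈ L, ((Fintype.card F : ℝ) / 200) := by rw [Finset.sum_const, nsmul_eq_mul]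
      _ ≤ ∑ l ∈ L, ((XF.filter (fun p => p ∈ l)).card : ℝ) := by
          refine Finset.sum_le_sum fun l hl => ?_
          rw [← hcount l]
          exact hinc l hl
  -- put everything together
  have hXcard : (X.ncard : ℝ) = (XF.card : ℝ) := by
    rw [← Set.ncard_coe_finset, hXfin.coe_toFinset]
  have hxpos : (0:ℝ) < (X.ncard : ℝ) := by
    have h0 : 0 < X.ncard := (Set.ncard_pos hXfin).mpr hX
    exact_mod_cast h0
  have hLpos : (0:ℝ) < (L.card : ℝ) := by
    have := Finset.card_pos.mpr hLne
    positivity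
  set q : ℝ := (Fintype.card F : ℝ) with hq
  have hq0 : 0 ≤ q := by positivity
  have hT : ((∑ p ∈ XF, d p ^ 2 : ℕ) : ℝ) ≤ (L.card : ℝ) * (q + N) := by
    calc ((∑ p ∈ XF, d p ^ 2 : ℕ) : ℝ) ≤ ((L.card * g l₀ : ℕ) : ℝ) := by exact_mod_cast hpigeon
      _ ≤ ((L.card * (Fintype.card F + N) : ℕ) : ℝ) := by
          exact_mod_cast Nat.mul_le_mul_left _ hgle
      _ = (L.card : ℝ) * (q + N) := by push_cast; ring
  have h1 : ((L.card : ℝ) * (q / 200)) ^ 2 ≤ (X.ncard : ℝ) * ((L.card : ℝ) * (q + N)) := by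
    calc ((L.card : ℝ) * (q / 200)) ^ 2 ≤ ((∑ p ∈ XF, d p : ℕ) : ℝ) ^ 2 := by
          have h0 : 0 ≤ (L.card : ℝ) * (q / 200) := by positivity
          exact pow_le_pow_left₀ h0 hlow 2
      _ ≤ (XF.card : ℝ) * ((∑ p ∈ XF, d p ^ 2 : ℕ) : ℝ) := hCS
      _ = (X.ncard : ℝ) * ((∑ p ∈ XF, d p ^ 2 : ℕ) : ℝ) := by rw [hXcard]
      _ ≤ (X.ncard : ℝ) * ((L.card : ℝ) * (q + N)) :=
          mul_le_mul_of_nonneg_left hT (le_of_lt hxpos)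
  have h2 : (L.card : ℝ) * (q ^ 2 / 200 ^ 2) ≤ (X.ncard : ℝ) * (q + N) := by
    nlinarith [h1, hLpos, hxpos]
  rw [htarget, sub_le_iff_le_add, div_le_iff₀ hxpos]
  nlinarith [h2]
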